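/- Let ν, ν₁, …, ν_d ∈ ℝ² and a₁ < ⋯ < a_{d−1} be real numbers. For (H,r) with r > 0, set H_i = H + a_i, ρ_i = √(r² + H_i²), f(H,r) = ν₁ + ½ Σ_{i=1}^{d−1} (1 − H_i/ρ_i)(ν_{i+1} − ν_i), and g(H,r) = ν + Σ_{i=1}^{d−1} (ν_{i+1} − ν_i)/(2ρ_i). Then the partial derivatives satisfy ∂f/∂r = −r ∂g/∂H and ∂f/∂H = r ∂g/∂r at every point with r > 0. -/

import Mathlib

open Real Finset

private lemma auxF_r (h r : ℝ) (hr : 0 < r) :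
    HasDerivAt (fun r' => 1 - h / Real.sqrt (r' ^ 2 + h ^ 2))
      (h * r / (Real.sqrt (r ^ 2 + h ^ 2)) ^ 3) r := by
  have hx : r ^ 2 + h ^ 2 ≠ 0 := by positivity
  have H1 : HasDerivAt (fun r' : ℝ => r' ^ 2 + h ^ 2) (2 * r) r := by
    simpa using (hasDerivAt_pow 2 r).add_const (h ^ 2)
  have H2 := H1.sqrt hx
  set ρ := Real.sqrt (r ^ 2 + h ^ 2) with hρdef
  have hρ : 0 < ρ := Real.sqrt_pos.2 (by positivity)
  have hsq : ρ ^ 2 = r ^ 2 + h ^ 2 := Real.sq_sqrt (by positivity)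
  have H3 := H2.inv hρ.ne'
  have H4 := (H3.const_mul h).const_sub 1
  refine H4.congr_deriv ?_
  simp only [← hρdef]
  field_simp

private lemma auxF_H (c r H : ℝ) (hr : 0 < r) :
    HasDerivAt (fun H' => 1 - (H' + c) / Real.sqrt (r ^ 2 + (H' + c) ^ 2))
      (-(r ^ 2) / (Real.sqrt (r ^ 2 + (H + c) ^ 2)) ^ 3) H := by
  have hx : r ^ 2 + (H + c) ^ 2 ≠ 0 := by positivity
  have hu : HasDerivAt (fun H' : ℝ => H' + c) 1 H := (hasDerivAt_id H).add_const c
  have H1 : HasDerivAt (fun H' : ℝ => r ^ 2 + (H' + c) ^ 2) (2 * (H + c) ^ 1 * 1) H :=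
    (hu.pow 2).const_add (r ^ 2)
  have H2 := H1.sqrt hx
  set ρ := Real.sqrt (r ^ 2 + (H + c) ^ 2) with hρdef
  have hρ : 0 < ρ := Real.sqrt_pos.2 (by positivity)
  have hsq : ρ ^ 2 = r ^ 2 + (H + c) ^ 2 := Real.sq_sqrt (by positivity)
  have H3 := H2.inv hρ.ne'
  have H4 := (hu.mul H3).const_sub 1
  refine H4.congr_deriv ?_
  simp only [Pi.inv_apply, ← hρdef]
  field_simp
  linear_combination (-1) * hsq

private lemma auxG_H (c r H : ℝ) (hr : 0 < r) :
    HasDerivAt (fun H' => 1 / (2 * Real.sqrt (r ^ 2 + (H' + c) ^ 2)))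
      (-(H + c) / (2 * (Real.sqrt (r ^ 2 + (H + c) ^ 2)) ^ 3)) H := by
  have hx : r ^ 2 + (H + c) ^ 2 ≠ 0 := by positivity
  have hu : HasDerivAt (fun H' : ℝ => H' + c) 1 H := (hasDerivAt_id H).add_const c
  have H1 : HasDerivAt (fun H' : ℝ => r ^ 2 + (H' + c) ^ 2) (2 * (H + c) ^ 1 * 1) H :=
    (hu.pow 2).const_add (r ^ 2)
  have H2 := H1.sqrt hx
  set ρ := Real.sqrt (r ^ 2 + (H + c) ^ 2) with hρdef
  have hρ : 0 < ρ := Real.sqrt_pos.2 (by positivity)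
  have H3 := (H2.const_mul 2).inv (by positivity : (2 * ρ : ℝ) ≠ 0)
  simp only [one_div]
  refine H3.congr_deriv ?_
  field_simp
  ring

private lemma auxG_r (h r : ℝ) (hr : 0 < r) :
    HasDerivAt (fun r' => 1 / (2 * Real.sqrt (r' ^ 2 + h ^ 2)))
      (-r / (2 * (Real.sqrt (r ^ 2 + h ^ 2)) ^ 3)) r := by
  have hx : r ^ 2 + h ^ 2 ≠ 0 := by positivity
  have H1 : HasDerivAt (fun r' : ℝ => r' ^ 2 + h ^ 2) (2 * r) r := by
    simpa using (hasDerivAt_pow 2 r).add_const (h ^ 2)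
  have H2 := H1.sqrt hx
  set ρ := Real.sqrt (r ^ 2 + h ^ 2) with hρdef
  have hρ : 0 < ρ := Real.sqrt_pos.2 (by positivity)
  have H3 := (H2.const_mul 2).inv (by positivity : (2 * ρ : ℝ) ≠ 0)
  simp only [one_div]
  refine H3.congr_deriv ?_
  field_simp
  ring

/-- The functions `f` and `g` of the Abreu–Sena-Dias construction satisfy
`∂f/∂r = −r ∂g/∂H` and `∂f/∂H = r ∂g/∂r` for `r > 0`. -/
theorem stmt_5 (n : ℕ) (ν : ℝ × ℝ) (νs : Fin (n + 1) → ℝ × ℝ)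
    (a : Fin n → ℝ) (ha : StrictMono a)
    (f g : ℝ → ℝ → ℝ × ℝ)
    (hf : f = fun H r => νs 0 + (1 / 2 : ℝ) •
      ∑ i : Fin n, (1 - (H + a i) / Real.sqrt (r ^ 2 + (H + a i) ^ 2)) •
        (νs i.succ - νs i.castSucc))
    (hg : g = fun H r => ν +
      ∑ i : Fin n, (1 / (2 * Real.sqrt (r ^ 2 + (H + a i) ^ 2))) •
        (νs i.succ - νs i.castSucc)) :
    ∀ H : ℝ, ∀ r : ℝ, 0 < r →
      deriv (fun r' => f H r') r = (-r) • deriv (fun H' => g H' r) H ∧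
      deriv (fun H' => f H' r) H = r • deriv (fun r' => g H r') r := by

  subst hf hg
  intro H r hr
  set v : Fin n → ℝ × ℝ := fun i => νs i.succ - νs i.castSucc with hv
  set ρ : Fin n → ℝ := fun i => Real.sqrt (r ^ 2 + (H + a i) ^ 2) with hρ
  have hρpos : ∀ i, 0 < ρ i := fun i => Real.sqrt_pos.2 (by positivity)
  have Dfr : deriv (fun r' => νs 0 + (1 / 2 : ℝ) •
      ∑ i : Fin n, (1 - (H + a i) / Real.sqrt (r' ^ 2 + (H + a i) ^ 2)) • v i) r
      = (1 / 2 : ℝ) • ∑ i : Fin n, ((H + a i) * r / ρ i ^ 3) • v i := by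
    exact ((((HasDerivAt.fun_sum fun i _ =>
      (auxF_r (H + a i) r hr).smul_const (v i))).const_smul
      ((1 : ℝ) / 2)).const_add (νs 0)).deriv
  have DfH : deriv (fun H' => νs 0 + (1 / 2 : ℝ) •
      ∑ i : Fin n, (1 - (H' + a i) / Real.sqrt (r ^ 2 + (H' + a i) ^ 2)) • v i) H
      = (1 / 2 : ℝ) • ∑ i : Fin n, (-(r ^ 2) / ρ i ^ 3) • v i := by
    exact ((((HasDerivAt.fun_sum fun i _ =>
      (auxF_H (a i) r H hr).smul_const (v i))).const_smul
      ((1 : ℝ) / 2)).const_add (νs 0)).deriv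
  have DgH : deriv (fun H' => ν +
      ∑ i : Fin n, (1 / (2 * Real.sqrt (r ^ 2 + (H' + a i) ^ 2))) • v i) H
      = ∑ i : Fin n, (-(H + a i) / (2 * ρ i ^ 3)) • v i := by
    exact (((HasDerivAt.fun_sum fun i _ =>
      (auxG_H (a i) r H hr).smul_const (v i))).const_add ν).deriv
  have Dgr : deriv (fun r' => ν +
      ∑ i : Fin n, (1 / (2 * Real.sqrt (r' ^ 2 + (H + a i) ^ 2))) • v i) r
      = ∑ i : Fin n, (-r / (2 * ρ i ^ 3)) • v i := by
    exact (((HasDerivAt.fun_sum fun i _ =>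
      (auxG_r (H + a i) r hr).smul_const (v i))).const_add ν).deriv
  refine ⟨?_, ?_⟩
  · rw [Dfr, DgH, Finset.smul_sum, Finset.smul_sum]
    refine Finset.sum_congr rfl fun i _ => ?_
    rw [smul_smul, smul_smul]
    congr 1
    have := (hρpos i).ne'
    field_simp
  · rw [DfH, Dgr, Finset.smul_sum, Finset.smul_sum]
    refine Finset.sum_congr rfl fun i _ => ?_
    rw [smul_smul, smul_smul]
    congr 1
    have := (hρpos i).ne'
    field_simp
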